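/- For every sequence (a_n)_{n≥1} of positive integers and every n ≥ 1, G(s_{n−1}s_n) ≥ G(s_n) + |s_{n−1}| + |s_n|; equivalently, G(s_{n−1}s_n)/|s_{n−1}s_n| ≥ G(s_n)/(|s_{n−1}| + |s_n|) + 1. -/

import Mathlib

open Filter

noncomputable section

/-- `k`-fold concatenation of a word. -/
def wpow (w : List Bool) : ℕ → List Bool
  | 0 => []
  | n + 1 => w ++ wpow w n

/-- The standard Sturmian words `s_{-1}, s_0, s_1, s_2, …` associated to a sequence
`(a_n)_{n ≥ 1}` of positive integers (the continued fraction coefficients):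
`st a 0 = s_{-1} = 1`, `st a 1 = s_0 = 0`, `st a 2 = s_1 = s_0^{a_1 - 1} s_{-1}` and
`st a (n+1) = s_n = s_{n-1}^{a_n} s_{n-2}` for `n ≥ 2` (`false` plays the role of the
letter `0` and `true` of the letter `1`). -/
def st (a : ℕ → ℕ) : ℕ → List Bool
  | 0 => [true]
  | 1 => [false]
  | 2 => wpow [false] (a 1 - 1) ++ [true]
  | n + 3 => wpow (st a (n + 2)) (a (n + 2)) ++ st a (n + 1)

/-- The set `𝒲` of Sturmian words: all subwords of some `s_n`, `n ≥ 0`. -/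
def sturmW (a : ℕ → ℕ) : Set (List Bool) :=
  {w | ∃ n : ℕ, 1 ≤ n ∧ w <:+: st a n}

/-- A subadditive function on a set of words: `F(uv) ≤ F(u) + F(v)` whenever `u`, `v`
and `uv` all belong to `W`, together with a linear bound `|F(w)| ≤ d·|w|`. -/
def WordSubadditive (W : Set (List Bool)) (F : List Bool → ℝ) : Prop :=
  (∀ u v : List Bool, u ∈ W → v ∈ W → u ++ v ∈ W → F (u ++ v) ≤ F u + F v) ∧
    ∃ dd : ℝ, 0 ≤ dd ∧ ∀ w ∈ W, |F w| ≤ dd * w.length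

/-- Number of occurrences of `v` as a subword of `w`: the number of indices
`0 ≤ i ≤ |w| - |v|` with `v = w_{i+1} ⋯ w_{i+|v|}`. -/
def occ (v w : List Bool) : ℕ :=
  ((Finset.range (w.length + 1 - v.length)).filter
    fun i => (w.drop i).take v.length = v).card

/-- The superadditive weight `G(w) = Σ_{n ≥ 1} #_{s_{n-1} s_n}(w) · (|s_{n-1}| + |s_n|)`
(all but finitely many terms vanish). -/
def Gfun (a : ℕ → ℕ) (w : List Bool) : ℝ :=
  ∑' n : ℕ, (occ (st a (n + 1) ++ st a (n + 2)) w : ℝ) *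
    (((st a (n + 1)).length : ℝ) + ((st a (n + 2)).length : ℝ))

lemma wpow_length (w : List Bool) : ∀ n, (wpow w n).length = n * w.length
  | 0 => by simp [wpow]
  | n + 1 => by simp [wpow, wpow_length w n]; ring

lemma st_length_pos (a : ℕ → ℕ) : ∀ n, 1 ≤ (st a n).length
  | 0 => by simp [st]
  | 1 => by simp [st]
  | 2 => by simp [st]
  | n + 3 => by
      have := st_length_pos a (n + 1)
      simp only [st, List.length_append]
      omega

lemma st_length_ge (a : ℕ → ℕ) (ha : ∀ n, 1 ≤ a n) : ∀ n, n ≤ (st a (n + 1)).length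
  | 0 => by simp [st]
  | 1 => by
      have := ha 1
      simp only [st, List.length_append, wpow_length, List.length_cons,
        List.length_nil, List.length_singleton]
      omega
  | n + 2 => by
      have h1 := st_length_ge a ha (n + 1)
      have h2 := st_length_pos a (n + 1)
      have h3 := ha (n + 2)
      have h4 := st_length_pos a (n + 2)
      show n + 2 ≤ (st a (n + 3)).length
      simp only [st, List.length_append, wpow_length]
      nlinarith

lemma occ_eq_zero (v w : List Bool) (h : w.length < v.length) : occ v w = 0 := by
  have h0 : w.length + 1 - v.length = 0 := by omega
  simp [occ, h0]

lemma occ_self (v : List Bool) : 1 ≤ occ v v := by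
  apply Finset.card_pos.mpr
  refine ⟨0, ?_⟩
  simp [Finset.mem_filter, Finset.mem_range]

lemma occ_le_append (v x y : List Bool) : occ v y ≤ occ v (x ++ y) := by
  unfold occ
  apply Finset.card_le_card_of_injOn (fun i => x.length + i)
  · intro i hi
    simp only [Finset.mem_coe, Finset.mem_filter, Finset.mem_range] at hi ⊢
    obtain ⟨h1, h2⟩ := hi
    constructor
    · simp only [List.length_append]; omega
    · rw [List.drop_append]; simpa [List.drop_eq_nil_of_le (Nat.le_add_right x.length i)] using h2
  · intro i _ j _ h
    simpa using h

lemma Gfun_eq_sum (a : ℕ → ℕ) (ha : ∀ n, 1 ≤ a n) (w : List Bool) (N : ℕ)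
    (hN : w.length ≤ N) :
    Gfun a w = ∑ n ∈ Finset.range N, (occ (st a (n + 1) ++ st a (n + 2)) w : ℝ) *
      (((st a (n + 1)).length : ℝ) + ((st a (n + 2)).length : ℝ)) := by
  apply tsum_eq_sum
  intro n hn
  have hn' : N ≤ n := by simpa [Finset.mem_range, not_lt] using hn
  have h1 := st_length_ge a ha n
  have h2 : n + 1 ≤ (st a (n + 2)).length := st_length_ge a ha (n + 1)
  have hlen : w.length < (st a (n + 1) ++ st a (n + 2)).length := by
    simp only [List.length_append]; omega
  rw [occ_eq_zero _ _ hlen]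
  simp

/-- For every `n ≥ 1`, `G(s_{n-1} s_n) ≥ G(s_n) + |s_{n-1}| + |s_n|`;
equivalently `G(s_{n-1}s_n)/|s_{n-1}s_n| ≥ G(s_n)/(|s_{n-1}| + |s_n|) + 1`.
(Here `s_n = st a (n+1)` and `s_{n-1} = st a n`, so the claim is stated for `k ≥ 1`.) -/
theorem Gfun_cat_lower_bound (a : ℕ → ℕ) (ha : ∀ n, 1 ≤ a n) :
    ∀ k : ℕ, 1 ≤ k →
      Gfun a (st a (k + 1)) + ((st a k).length : ℝ) + ((st a (k + 1)).length : ℝ) ≤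
        Gfun a (st a k ++ st a (k + 1)) ∧
      Gfun a (st a (k + 1)) / (((st a k).length : ℝ) + ((st a (k + 1)).length : ℝ)) + 1 ≤
        Gfun a (st a k ++ st a (k + 1)) / ((st a k ++ st a (k + 1)).length : ℝ) := by
  intro k hk
  obtain ⟨m, rfl⟩ : ∃ m, k = m + 1 := ⟨k - 1, by omega⟩
  have hxpos := st_length_pos a (m + 1)
  have hypos := st_length_pos a (m + 2)
  set x := st a (m + 1) with hxdef
  set y := st a (m + 2) with hydef
  set N := (x ++ y).length with hNdef
  have hNy : y.length ≤ N := by simp [hNdef, List.length_append]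
  have hw : Gfun a (x ++ y) = ∑ n ∈ Finset.range N,
      (occ (st a (n + 1) ++ st a (n + 2)) (x ++ y) : ℝ) *
      (((st a (n + 1)).length : ℝ) + ((st a (n + 2)).length : ℝ)) :=
    Gfun_eq_sum a ha _ N le_rfl
  have hyeq : Gfun a y = ∑ n ∈ Finset.range N,
      (occ (st a (n + 1) ++ st a (n + 2)) y : ℝ) *
      (((st a (n + 1)).length : ℝ) + ((st a (n + 2)).length : ℝ)) :=
    Gfun_eq_sum a ha _ N hNy
  have hmN : m ∈ Finset.range N := by
    have : m + 1 ≤ y.length := st_length_ge a ha (m + 1)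
    simp only [Finset.mem_range, hNdef, List.length_append]
    omega
  set L : ℝ := ((x.length : ℝ) + (y.length : ℝ)) with hLdef
  have hLpos : (0 : ℝ) < L := by
    have : (1 : ℝ) ≤ (x.length : ℝ) := by exact_mod_cast hxpos
    have : (1 : ℝ) ≤ (y.length : ℝ) := by exact_mod_cast hypos
    positivity
  have key : Gfun a y + (x.length : ℝ) + (y.length : ℝ) ≤ Gfun a (x ++ y) := by
    rw [hw, hyeq]
    have step1 : (∑ n ∈ Finset.range N,
        (occ (st a (n + 1) ++ st a (n + 2)) y : ℝ) *
        (((st a (n + 1)).length : ℝ) + ((st a (n + 2)).length : ℝ)))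
        + (x.length : ℝ) + (y.length : ℝ)
        = ∑ n ∈ Finset.range N,
          ((occ (st a (n + 1) ++ st a (n + 2)) y : ℝ) *
          (((st a (n + 1)).length : ℝ) + ((st a (n + 2)).length : ℝ))
          + if n = m then L else 0) := by
      rw [Finset.sum_add_distrib, Finset.sum_ite_eq' (Finset.range N) m fun _ => L,
        if_pos hmN, hLdef]
      ring
    rw [step1]
    apply Finset.sum_le_sum
    intro n _
    by_cases hnm : n = m
    · subst hnm
      have hocc0 : occ (st a (n + 1) ++ st a (n + 2)) y = 0 := by
        apply occ_eq_zero
        simp only [List.length_append, ← hxdef, ← hydef]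
        omega
      have hocc1 : (1 : ℝ) ≤ (occ (st a (n + 1) ++ st a (n + 2)) (x ++ y) : ℝ) := by
        exact_mod_cast occ_self (x ++ y)
      rw [hocc0]
      have hLeq : (((st a (n + 1)).length : ℝ) + ((st a (n + 2)).length : ℝ)) = L := by
        rw [hLdef, hxdef, hydef]
      rw [hLeq]
      simp only [Nat.cast_zero, zero_mul, zero_add, eq_self_iff_true, if_true]
      nlinarith [hocc1, hLpos]
    · rw [if_neg hnm, add_zero]
      apply mul_le_mul_of_nonneg_right
      · exact_mod_cast occ_le_append _ x y
      · positivity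
  refine ⟨key, ?_⟩
  have hlen : ((x ++ y).length : ℝ) = L := by
    rw [hLdef]; push_cast [List.length_append]; ring
  rw [hlen]
  have h1 : Gfun a y / L + 1 = (Gfun a y + L) / L := by
    field_simp
  rw [h1]
  gcongr
  linarith [key]
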